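/- Existence and uniqueness of the constrained support threshold: for x ∈ (0,1/2) and 0 < ᾱ < α*_x = κ_x(s*(x))/(1+κ_x(s*(x))), there exists a unique ŝ(x) < s*(x) such that ∫_{ŝ(x)}^{s*(x)} ((1−ᾱ)/ᾱ)·κ_x'(t) dt = 1, where κ_x'(t) = [x·f0(t) − (1−x)·f1(t)]/(1−2x) > 0 on (−∞, s*(x)). -/

import Mathlib

open MeasureTheory Set Filter

/-- existence and uniqueness of the constrained support
threshold `ŝ(x) < s*(x)` with
`∫_{ŝ(x)}^{s*(x)} ((1−ᾱ)/ᾱ) κ_x'(t) dt = 1`, when `0 < ᾱ < α*_x`. -/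
theorem stmt_18 (f0 f1 : ℝ → ℝ)
    (hf0c : Continuous f0) (hf1c : Continuous f1)
    (hf0 : ∀ s, 0 < f0 s) (hf1 : ∀ s, 0 < f1 s)
    (hm : StrictMono fun s => f1 s / f0 s)
    (x : ℝ) (hx : x ∈ Set.Ioo (0 : ℝ) (1 / 2))
    (sstar : ℝ) (hstar : f1 sstar / f0 sstar = x / (1 - x))
    (hint : IntegrableOn (fun t => (x * f0 t - (1 - x) * f1 t) / (1 - 2 * x))
      (Set.Iic sstar))
    (κs : ℝ) (hκs : κs = ∫ t in Set.Iic sstar,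
      (x * f0 t - (1 - x) * f1 t) / (1 - 2 * x))
    (αstar ᾱ : ℝ) (hαstar : αstar = κs / (1 + κs))
    (hᾱ0 : 0 < ᾱ) (hᾱ : ᾱ < αstar) :
    ∃! sh : ℝ, sh < sstar ∧
      (∫ t in Set.Ioc sh sstar,
        ((1 - ᾱ) / ᾱ) * ((x * f0 t - (1 - x) * f1 t) / (1 - 2 * x))) = 1 := by
  obtain ⟨hx0, hx2⟩ := hx
  have h2x : 0 < 1 - 2 * x := by linarith
  have hx1 : 0 < 1 - x := by linarith
  set g : ℝ → ℝ := fun t => (x * f0 t - (1 - x) * f1 t) / (1 - 2 * x) with hg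
  have hgc : Continuous g := ((continuous_const.mul hf0c).sub
    (continuous_const.mul hf1c)).div_const _
  have hgpos : ∀ t < sstar, 0 < g t := by
    intro t ht
    have h := hm ht
    simp only at h
    rw [hstar, div_lt_div_iff₀ (hf0 t) hx1] at h
    exact div_pos (by nlinarith) h2x
  have hg0 : g sstar = 0 := by
    rw [div_eq_div_iff (hf0 sstar).ne' hx1.ne'] at hstar
    simp only [hg]
    rw [div_eq_zero_iff]
    left; nlinarith
  have hgnn : ∀ t ≤ sstar, 0 ≤ g t := by
    intro t ht
    rcases lt_or_eq_of_le ht with h | h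
    · exact (hgpos t h).le
    · rw [h, hg0]
  have hgii : ∀ a b : ℝ, IntervalIntegrable g volume a b :=
    fun a b => hgc.intervalIntegrable a b
  set φ : ℝ → ℝ := fun s => ∫ t in s..sstar, g t with hφ
  have hφc : Continuous φ := by
    have h1 := (intervalIntegral.continuous_primitive hgii sstar).neg
    have h2 : φ = fun s => -∫ t in sstar..s, g t := by
      funext s
      rw [hφ]
      exact intervalIntegral.integral_symm sstar s
    rw [h2]
    exact h1
  have hφanti : StrictAntiOn φ (Iic sstar) := by
    intro a ha b hb hab
    have hsum : (∫ t in a..b, g t) + ∫ t in b..sstar, g t = ∫ t in a..sstar, g t :=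
      intervalIntegral.integral_add_adjacent_intervals (hgii a b) (hgii b sstar)
    have hpos : 0 < ∫ t in a..b, g t :=
      intervalIntegral.intervalIntegral_pos_of_pos_on (hgii a b)
        (fun t ht => hgpos t (lt_of_lt_of_le ht.2 hb)) hab
    simp only [hφ]
    linarith
  have hφ_eq : ∀ s ≤ sstar, φ s = ∫ t in Ioc s sstar, g t := by
    intro s hs
    simp [hφ, intervalIntegral.integral_of_le hs]
  -- κs > 0
  have hκpos : 0 < κs := by
    have h1 : 0 < ∫ t in (sstar - 1)..sstar, g t :=
      intervalIntegral.intervalIntegral_pos_of_pos_on (hgii _ _)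
        (fun t ht => hgpos t ht.2) (by linarith)
    have h2 : (∫ t in Ioc (sstar - 1) sstar, g t) ≤ ∫ t in Iic sstar, g t := by
      apply setIntegral_mono_set hint
      · rw [EventuallyLE, ae_restrict_iff' measurableSet_Iic]
        filter_upwards with t ht using hgnn t ht
      · exact Eventually.of_forall fun t ht => ht.2
    rw [hκs]
    rw [intervalIntegral.integral_of_le (by linarith : sstar - 1 ≤ sstar)] at h1
    exact lt_of_lt_of_le h1 h2
  -- constants
  have hᾱ1 : ᾱ < 1 := by
    have : αstar < 1 := by
      rw [hαstar, div_lt_one (by linarith)]; linarith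
    linarith
  have hC : 0 < (1 - ᾱ) / ᾱ := div_pos (by linarith) hᾱ0
  set c : ℝ := ᾱ / (1 - ᾱ) with hc
  have hc0 : 0 < c := div_pos hᾱ0 (by linarith)
  have hcκ : c < κs := by
    rw [hαstar, lt_div_iff₀ (by linarith : (0:ℝ) < 1 + κs)] at hᾱ
    rw [hc, div_lt_iff₀ (by linarith : (0:ℝ) < 1 - ᾱ)]
    nlinarith
  -- limit of φ along sstar - n
  have hlim : Tendsto (fun n : ℕ => ∫ t in Ioc (sstar - n) sstar, g t)
      atTop (nhds κs) := by
    have hmono : Monotone fun n : ℕ => Ioc (sstar - n) sstar := by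
      intro m n hmn
      have : (m : ℝ) ≤ n := Nat.cast_le.mpr hmn
      exact Ioc_subset_Ioc (by linarith) le_rfl
    have hunion : (⋃ n : ℕ, Ioc (sstar - n) sstar) = Iic sstar := by
      ext t
      simp only [mem_iUnion, mem_Ioc, mem_Iic]
      constructor
      · rintro ⟨n, _, h⟩; exact h
      · intro ht
        obtain ⟨n, hn⟩ := exists_nat_gt (sstar - t)
        exact ⟨n, by linarith, ht⟩
    have := tendsto_setIntegral_of_monotone (f := g) (μ := volume)
      (fun n : ℕ => measurableSet_Ioc) hmono (by rwa [hunion])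
    rwa [hunion, ← hκs] at this
  obtain ⟨N, hN⟩ := (hlim.eventually (eventually_gt_nhds hcκ)).exists
  set a : ℝ := sstar - N with ha
  have haN : a ≤ sstar := by simp [ha]
  have hφa : c < φ a := by rw [hφ_eq a haN]; exact hN
  -- IVT
  have hIcc : c ∈ Icc (φ sstar) (φ a) := by
    constructor
    · simp [hφ]; exact hc0.le
    · exact hφa.le
  obtain ⟨sh, hshmem, hshval⟩ :=
    intermediate_value_Icc' haN hφc.continuousOn hIcc
  have hshlt : sh < sstar := by
    rcases lt_or_eq_of_le hshmem.2 with h | h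
    · exact h
    · exfalso
      rw [h] at hshval
      simp [hφ] at hshval
      rw [← hshval] at hc0
      exact lt_irrefl _ hc0
  have key : ∀ y < sstar, ((∫ t in Set.Ioc y sstar,
      ((1 - ᾱ) / ᾱ) * g t) = 1 ↔ φ y = c) := by
    intro y hy
    rw [integral_const_mul, ← hφ_eq y hy.le]
    have hᾱne : ᾱ ≠ 0 := ne_of_gt hᾱ0
    have h1ᾱne : (1 : ℝ) - ᾱ ≠ 0 := by linarith
    constructor
    · intro h
      rw [hc]
      field_simp
      field_simp [hᾱne, h1ᾱne] at h
      linear_combination h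
    · intro h
      rw [h, hc]
      field_simp [hᾱne, h1ᾱne]
  refine ⟨sh, ⟨hshlt, (key sh hshlt).mpr hshval⟩, ?_⟩
  rintro y ⟨hy, hyval⟩
  have h1 : φ y = c := (key y hy).mp hyval
  exact hφanti.injOn hy.le hshlt.le (h1.trans hshval.symm)
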